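/- Let G be a finitely generated group admitting a finite symmetric generating system S_0 such that: (1) there are no s₁, s₂, s₃ ∈ S_0 with s₁s₂ = s₃; (2) there are no s₁, s₂ ∈ S_0 with s₁ ≠ s₂ and s₁ ≠ s₂⁻¹ and s₁²s₂² = e; (3) there are no s₁, s₂ ∈ S_0 with s₁ ≠ s₂ and s₁ ≠ s₂⁻¹ and s₂⁻¹s₁s₂ = s₁⁻¹; (4) there are no s₁, s₂ ∈ S_0 with s₁ ≠ s₂ and s₁ ≠ s₂⁻¹ and s₂⁻¹s₁s₂ = s₁; (5) S_0 contains at least two distinct elements that are not inverses of each other. Then every bijection φ: G → G that is an isometry of (G, d_S) for every finite symmetric generating system S of G is a left translation x ↦ c·x for some c ∈ G; consequently the group of all such shared isometries is isomorphic to G. -/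

import Mathlib

/-! Common definitions: word metrics, quasi-isometries, rough isometries. -/

/-- `g` is a product of `n` elements of `S ∪ S⁻¹`. -/
def IsWordProd {G : Type*} [Group G] (S : Set G) (g : G) (n : ℕ) : Prop :=
  ∃ l : List G, l.length = n ∧ (∀ s ∈ l, s ∈ S ∪ S⁻¹) ∧ l.prod = g

/-- The word metric associated to a generating system `S`: the least `n` such that
`x⁻¹ * y` is a product of `n` elements of `S ∪ S⁻¹`. -/
noncomputable def wdist {G : Type*} [Group G] (S : Set G) (x y : G) : ℕ :=
  sInf {n | IsWordProd S (x⁻¹ * y) n}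

/-- The word norm `‖g‖_S = d_S(e, g)`. -/
noncomputable def wnorm {G : Type*} [Group G] (S : Set G) (g : G) : ℕ :=
  wdist S 1 g

/-- `(η, η')` is a `(lam, eps)`-quasi-isometry between `(X, dX)` and `(Y, dY)`. -/
def IsQIPair {X Y : Type*} (dX : X → X → ℝ) (dY : Y → Y → ℝ)
    (η : X → Y) (η' : Y → X) (lam eps : ℝ) : Prop :=
  (∀ x x' : X, lam⁻¹ * dX x x' - eps ≤ dY (η x) (η x') ∧
      dY (η x) (η x') ≤ lam * dX x x' + eps) ∧
  (∀ y y' : Y, lam⁻¹ * dY y y' - eps ≤ dX (η' y) (η' y') ∧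
      dX (η' y) (η' y') ≤ lam * dY y y' + eps) ∧
  (∀ y : Y, dY (η (η' y)) y ≤ eps) ∧
  (∀ x : X, dX (η' (η x)) x ≤ eps)

/-- `(η, η')` is an `eps`-isometry between `(X, dX)` and `(Y, dY)`. -/
def IsEpsIsomPair {X Y : Type*} (dX : X → X → ℝ) (dY : Y → Y → ℝ)
    (η : X → Y) (η' : Y → X) (eps : ℝ) : Prop :=
  (∀ x x' : X, |dX x x' - dY (η x) (η x')| ≤ eps) ∧
  (∀ y y' : Y, |dY y y' - dX (η' y) (η' y')| ≤ eps) ∧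
  (∀ y : Y, dY (η (η' y)) y ≤ eps) ∧
  (∀ x : X, dX (η' (η x)) x ≤ eps)

/-- The real-valued word metric. -/
noncomputable def wdistR {G : Type*} [Group G] (S : Set G) (x y : G) : ℝ :=
  (wdist S x y : ℝ)

/-- The group (under composition) of bijections of `G` preserving the distance `d S`
for every generating system `S` in the family `𝒮`, as a subgroup of `Equiv.Perm G`. -/
def sharedIsomGroup {G : Type*} [Group G] (𝒮 : Set (Set G))
    (d : Set G → G → G → ℕ) : Subgroup (Equiv.Perm G) where
  carrier := {φ : Equiv.Perm G | ∀ S ∈ 𝒮, ∀ x y : G, d S (φ x) (φ y) = d S x y}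
  one_mem' := fun S _ x y => rfl
  mul_mem' := by
    intro a b ha hb S hS x y
    rw [Equiv.Perm.mul_apply, Equiv.Perm.mul_apply, ha S hS, hb S hS]
  inv_mem' := by
    intro a ha S hS x y
    have h := ha S hS (a⁻¹ x) (a⁻¹ y)
    have e : ∀ z : G, a (a⁻¹ z) = z := fun z => a.apply_symm_apply z
    rw [e, e] at h
    exact h.symm

/-- The family of all finite symmetric generating systems of `G`. -/
def symGenFamily (G : Type*) [Group G] : Set (Set G) :=
  {S : Set G | S.Finite ∧ S⁻¹ = S ∧ Subgroup.closure S = ⊤}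

section Aux

variable {G : Type*} [Group G]

private lemma exists_wordProd {S : Set G} (hgen : Subgroup.closure S = ⊤) (g : G) :
    ∃ n, IsWordProd S g n := by
  have hg : g ∈ (Subgroup.closure S).toSubmonoid := by
    rw [hgen]; trivial
  rw [Subgroup.closure_toSubmonoid] at hg
  obtain ⟨l, hl, hp⟩ := Submonoid.exists_list_of_mem_closure hg
  exact ⟨l.length, l, rfl, hl, hp⟩

private lemma wdist_nonempty {S : Set G} (hgen : Subgroup.closure S = ⊤) (x y : G) :
    {n | IsWordProd S (x⁻¹ * y) n}.Nonempty :=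
  exists_wordProd hgen _

private lemma wdist_eq_zero_iff {S : Set G} (hgen : Subgroup.closure S = ⊤) (x y : G) :
    wdist S x y = 0 ↔ x = y := by
  constructor
  · intro h
    rcases Nat.sInf_eq_zero.mp h with h0 | hemp
    · obtain ⟨l, hlen, _, hp⟩ := h0
      rw [List.length_eq_zero_iff] at hlen
      subst hlen
      simp only [List.prod_nil] at hp
      exact (inv_mul_eq_one.mp hp.symm)
    · exact absurd hemp (Set.nonempty_iff_ne_empty.mp (wdist_nonempty hgen x y))
  · rintro rfl
    apply Nat.sInf_eq_zero.mpr
    exact Or.inl ⟨[], rfl, by simp, by simp⟩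

private lemma wdist_eq_one_iff {S : Set G} (hgen : Subgroup.closure S = ⊤) (x y : G) :
    wdist S x y = 1 ↔ (x⁻¹ * y ∈ S ∪ S⁻¹ ∧ x ≠ y) := by
  constructor
  · intro h
    have hmem : (1 : ℕ) ∈ {n | IsWordProd S (x⁻¹ * y) n} := by
      rw [← h]; exact Nat.sInf_mem (wdist_nonempty hgen x y)
    obtain ⟨l, hlen, hl, hp⟩ := hmem
    obtain ⟨a, rfl⟩ := List.length_eq_one_iff.mp hlen
    simp only [List.prod_singleton] at hp
    refine ⟨hp ▸ hl a (by simp), ?_⟩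
    intro hxy
    rw [← wdist_eq_zero_iff hgen x y] at hxy
    omega
  · rintro ⟨hm, hne⟩
    have hle : wdist S x y ≤ 1 := Nat.sInf_le ⟨[x⁻¹ * y], rfl, by simpa using hm, by simp⟩
    have h0 : wdist S x y ≠ 0 := fun h => hne ((wdist_eq_zero_iff hgen x y).mp h)
    omega

private lemma wdist_mul_left (S : Set G) (c x y : G) :
    wdist S (c * x) (c * y) = wdist S x y := by
  unfold wdist
  rw [show (c * x)⁻¹ * (c * y) = x⁻¹ * y by group]

/-- A shared isometry condition. -/
private def SharedIso {G : Type*} [Group G] (χ : G → G) : Prop :=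
  ∀ S : Set G, S.Finite → S⁻¹ = S → Subgroup.closure S = ⊤ →
    ∀ x y : G, wdist S (χ x) (χ y) = wdist S x y

/-- membership in a finite symmetric generating set not containing 1 is preserved. -/
private lemma mem_iff_chi {χ : G → G} (hiso : SharedIso χ) (hone : χ 1 = 1) {S : Set G}
    (hfin : S.Finite) (hsym : S⁻¹ = S) (hgen : Subgroup.closure S = ⊤)
    (h1S : (1 : G) ∉ S) (u : G) : χ u ∈ S ↔ u ∈ S := by
  have hU : S ∪ S⁻¹ = S := by rw [hsym, Set.union_self]
  have key : wdist S 1 (χ u) = wdist S 1 u := by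
    have h := hiso S hfin hsym hgen 1 u
    rwa [hone] at h
  constructor
  · intro h
    have h1 : wdist S 1 (χ u) = 1 := by
      refine (wdist_eq_one_iff hgen 1 (χ u)).mpr ⟨by simpa [hU] using h, ?_⟩
      intro he; exact h1S (he ▸ h)
    rw [key] at h1
    have := ((wdist_eq_one_iff hgen 1 u).mp h1).1
    simpa [hU] using this
  · intro h
    have h1 : wdist S 1 u = 1 := by
      refine (wdist_eq_one_iff hgen 1 u).mpr ⟨by simpa [hU] using h, ?_⟩
      intro he; exact h1S (he ▸ h)
    rw [← key] at h1
    have := ((wdist_eq_one_iff hgen 1 (χ u)).mp h1).1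
    simpa [hU] using this

private lemma symm_of_mem_inv {S : Set G} (h : ∀ u ∈ S, u⁻¹ ∈ S) : S⁻¹ = S := by
  ext u
  constructor
  · intro hu
    have hu' : u⁻¹ ∈ S := Set.mem_inv.mp hu
    have := h _ hu'
    simpa using this
  · intro hu
    exact Set.mem_inv.mpr (h u hu)

section Main

variable {S₀ : Set G} (hfin : S₀.Finite) (hsym : S₀⁻¹ = S₀)
    (hgen : Subgroup.closure S₀ = ⊤)
    (h1 : ∀ s₁ ∈ S₀, ∀ s₂ ∈ S₀, ∀ s₃ ∈ S₀, s₁ * s₂ ≠ s₃)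
    (h2 : ∀ s₁ ∈ S₀, ∀ s₂ ∈ S₀, s₁ ≠ s₂ → s₁ ≠ s₂⁻¹ → s₁ ^ 2 * s₂ ^ 2 ≠ 1)
    (h3 : ∀ s₁ ∈ S₀, ∀ s₂ ∈ S₀, s₁ ≠ s₂ → s₁ ≠ s₂⁻¹ → s₂⁻¹ * s₁ * s₂ ≠ s₁⁻¹)
    (h4 : ∀ s₁ ∈ S₀, ∀ s₂ ∈ S₀, s₁ ≠ s₂ → s₁ ≠ s₂⁻¹ → s₂⁻¹ * s₁ * s₂ ≠ s₁)
    {s₁ s₂ : G} (hs₁ : s₁ ∈ S₀) (hs₂ : s₂ ∈ S₀) (h12 : s₁ ≠ s₂) (h12' : s₁ ≠ s₂⁻¹)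

include hfin hsym hgen h1 hs₁ hs₂ h12 h12'

private lemma k2 (χ : G → G) (hiso : SharedIso χ) (hone : χ 1 = 1) (x : G) :
    χ x = x ∨ χ x = x⁻¹ := by
  have hTinv : ∀ u ∈ S₀, u⁻¹ ∈ S₀ := by
    intro u hu
    rw [← hsym]
    simpa using hu
  have hT1 : (1 : G) ∉ S₀ := fun h => h1 1 h 1 h 1 h (mul_one 1)
  by_cases hx1 : x = 1
  · left; rw [hx1, hone]
  have hmemT := mem_iff_chi hiso hone hfin hsym hgen hT1
  by_cases hxT : x ∈ S₀
  · -- x is a generator: use the modified generating set S'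
    obtain ⟨t, ht, hts, hts'⟩ : ∃ t ∈ S₀, t ≠ x ∧ t ≠ x⁻¹ := by
      by_cases hc : x = s₁ ∨ x = s₁⁻¹
      · rcases hc with h' | h'
        · subst h'
          exact ⟨s₂, hs₂, fun h => h12 h.symm, fun h => h12' (by rw [h, inv_inv])⟩
        · subst h'
          refine ⟨s₂, hs₂, fun h => h12' (by rw [h, inv_inv]), fun h => h12 (by rw [h, inv_inv])⟩
      · push_neg at hc
        exact ⟨s₁, hs₁, fun h => hc.1 h.symm, fun h => hc.2 (by rw [h, inv_inv])⟩
    set S' : Set G := (S₀ \ {x, x⁻¹}) ∪ {x * t, t⁻¹ * x⁻¹, t⁻¹ * x, x⁻¹ * t} with hS'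
    have htS' : t ∈ S' := Or.inl ⟨ht, by simp [hts, hts']⟩
    have hxtS' : x * t ∈ S' := Or.inr (by left; rfl)
    have htxS' : t⁻¹ * x⁻¹ ∈ S' := Or.inr (by right; left; rfl)
    have htx2S' : t⁻¹ * x ∈ S' := Or.inr (by right; right; left; rfl)
    have hxt2S' : x⁻¹ * t ∈ S' := Or.inr (by right; right; right; rfl)
    have hmemS' : ∀ u, u ∈ S' →
        (u ∈ S₀ ∧ u ≠ x ∧ u ≠ x⁻¹) ∨ u = x * t ∨ u = t⁻¹ * x⁻¹ ∨ u = t⁻¹ * x ∨ u = x⁻¹ * t := by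
      intro u hu
      rcases hu with ⟨hu1, hu2⟩ | hu
      · refine Or.inl ⟨hu1, ?_, ?_⟩
        · intro h; exact hu2 (by rw [h]; left; rfl)
        · intro h; exact hu2 (by rw [h]; right; rfl)
      · simp only [Set.mem_insert_iff, Set.mem_singleton_iff] at hu
        exact Or.inr hu
    have hfin' : S'.Finite := by
      apply Set.Finite.union hfin.diff
      exact (Set.finite_singleton _).insert _ |>.insert _ |>.insert _
    have hsym' : S'⁻¹ = S' := by
      apply symm_of_mem_inv
      intro u hu
      rcases hmemS' u hu with ⟨hu1, hu2, hu3⟩ | rfl | rfl | rfl | rfl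
      · refine Or.inl ⟨hTinv _ hu1, ?_⟩
        simp only [Set.mem_insert_iff, Set.mem_singleton_iff]
        push_neg
        constructor
        · intro h; exact hu3 (by rw [← inv_inv u, h])
        · intro h; exact hu2 (by rw [← inv_inv u, h, inv_inv])
      · rw [show (x * t)⁻¹ = t⁻¹ * x⁻¹ by group]; exact htxS'
      · rw [show (t⁻¹ * x⁻¹)⁻¹ = x * t by group]; exact hxtS'
      · rw [show (t⁻¹ * x)⁻¹ = x⁻¹ * t by group]; exact hxt2S'
      · rw [show (x⁻¹ * t)⁻¹ = t⁻¹ * x by group]; exact htx2S'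
    have hgen' : Subgroup.closure S' = ⊤ := by
      rw [eq_top_iff, ← hgen]
      apply (Subgroup.closure_le (Subgroup.closure S')).mpr
      intro u hu
      have h2m : t ∈ Subgroup.closure S' := Subgroup.subset_closure htS'
      by_cases hux : u = x
      · rw [hux]
        have h1m : x * t ∈ Subgroup.closure S' := Subgroup.subset_closure hxtS'
        have hx : x = (x * t) * t⁻¹ := by group
        rw [SetLike.mem_coe, hx]
        exact mul_mem h1m (inv_mem h2m)
      · by_cases hux' : u = x⁻¹
        · rw [hux']
          have h1m : t⁻¹ * x⁻¹ ∈ Subgroup.closure S' := Subgroup.subset_closure htxS'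
          have hx : x⁻¹ = t * (t⁻¹ * x⁻¹) := by group
          rw [SetLike.mem_coe, hx]
          exact mul_mem h2m h1m
        · exact Subgroup.subset_closure (Or.inl ⟨hu, by simp [hux, hux']⟩)
    have h1S' : (1 : G) ∉ S' := by
      intro hu
      rcases hmemS' 1 hu with ⟨hu1, _, _⟩ | h | h | h | h
      · exact hT1 hu1
      · exact hts' (eq_inv_of_mul_eq_one_right h.symm)
      · have := eq_inv_of_mul_eq_one_right h.symm
        rw [inv_inv] at this
        exact hts' this.symm
      · have := eq_inv_of_mul_eq_one_right h.symm
        rw [inv_inv] at this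
        exact hts this.symm
      · have := eq_inv_of_mul_eq_one_right h.symm
        rw [inv_inv] at this
        exact hts this
    have hxS' : x ∉ S' := by
      intro hu
      rcases hmemS' x hu with ⟨_, hne, _⟩ | h | h | h | h
      · exact hne rfl
      · have : t = 1 := mul_left_cancel (a := x) (b := t) (c := 1) (by rw [mul_one, ← h])
        exact hT1 (this ▸ ht)
      · have hxx : x * x = t⁻¹ := by nth_rewrite 1 [h]; group
        exact h1 x hxT x hxT t⁻¹ (hTinv t ht) hxx
      · have : t⁻¹ = 1 := mul_right_cancel (a := t⁻¹) (b := x) (c := 1) (by rw [one_mul, ← h])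
        exact hT1 (inv_eq_one.mp this ▸ ht)
      · have hxx : x * x = t := by nth_rewrite 2 [h]; group
        exact h1 x hxT x hxT t ht hxx
    have hmem' := mem_iff_chi hiso hone hfin' hsym' hgen' h1S'
    have hχT : χ x ∈ S₀ := (hmemT x).mpr hxT
    have hχS' : χ x ∉ S' := fun h => hxS' ((hmem' x).mp h)
    by_contra hno
    push_neg at hno
    exact hχS' (Or.inl ⟨hχT, by simp [hno.1, hno.2]⟩)
  · -- x outside the generators
    set S : Set G := S₀ ∪ {x, x⁻¹} with hS
    have hfin' : S.Finite := hfin.union ((Set.finite_singleton _).insert _)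
    have hsym' : S⁻¹ = S := by
      apply symm_of_mem_inv
      intro u hu
      rcases hu with h | h
      · exact Or.inl (hTinv _ h)
      · simp only [Set.mem_insert_iff, Set.mem_singleton_iff] at h
        rcases h with rfl | rfl
        · exact Or.inr (by right; rfl)
        · rw [inv_inv]; exact Or.inr (by left; rfl)
    have hgen' : Subgroup.closure S = ⊤ := by
      rw [eq_top_iff, ← hgen]
      exact Subgroup.closure_mono Set.subset_union_left
    have h1S : (1 : G) ∉ S := by
      intro hu
      rcases hu with h | h
      · exact hT1 h
      · simp only [Set.mem_insert_iff, Set.mem_singleton_iff] at h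
        rcases h with h | h
        · exact hx1 h.symm
        · exact hx1 (by rw [← inv_inv x, ← h, inv_one])
    have hmem := mem_iff_chi hiso hone hfin' hsym' hgen' h1S
    have hχS : χ x ∈ S := (hmem x).mpr (Or.inr (by left; rfl))
    rcases hχS with h | h
    · exact absurd ((hmemT x).mp h) hxT
    · simp only [Set.mem_insert_iff, Set.mem_singleton_iff] at h
      exact h

private lemma star (χ : G → G) (hiso : SharedIso χ) (hone : χ 1 = 1) (a x : G) :
    χ (a * x) = χ a * x ∨ χ (a * x) = χ a * x⁻¹ := by
  set ψ : G → G := fun w => (χ a)⁻¹ * χ (a * w) with hψ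
  have hψiso : SharedIso ψ := by
    intro S hf hs hg u v
    simp only [hψ]
    rw [wdist_mul_left, hiso S hf hs hg, wdist_mul_left]
  have hψone : ψ 1 = 1 := by simp [hψ, hone]
  rcases k2 hfin hsym hgen h1 hs₁ hs₂ h12 h12' ψ hψiso hψone x with h | h
  · left
    have := congrArg (fun z => χ a * z) h
    simpa [hψ, mul_assoc] using this
  · right
    have := congrArg (fun z => χ a * z) h
    simpa [hψ, mul_assoc] using this

include h2 h3 h4 in
private lemma fix_all (χ : G → G) (hiso : SharedIso χ) (hone : χ 1 = 1) (x : G) : χ x = x := by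
  have hk2 := k2 hfin hsym hgen h1 hs₁ hs₂ h12 h12' χ hiso hone
  have hst := star hfin hsym hgen h1 hs₁ hs₂ h12 h12' χ hiso hone
  have hTinv : ∀ u ∈ S₀, u⁻¹ ∈ S₀ := by
    intro u hu
    rw [← hsym]
    simpa using hu
  have ne21 : s₂ ≠ s₁ := fun h => h12 h.symm
  have ne21' : s₂ ≠ s₁⁻¹ := fun h => h12' (by rw [h, inv_inv])
  have hs1inv : s₁⁻¹ ∈ S₀ := hTinv _ hs₁
  have hs2inv : s₂⁻¹ ∈ S₀ := hTinv _ hs₂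
  -- Step 1 : χ fixes s₁
  have hfix1 : χ s₁ = s₁ := by
    rcases hk2 s₁ with h | h
    · exact h
    rcases hst s₁ s₂⁻¹ with h' | h'
    · rw [h] at h'
      rcases hk2 (s₁ * s₂⁻¹) with h'' | h''
      · have heq : s₁⁻¹ * s₂⁻¹ = s₁ * s₂⁻¹ := h'.symm.trans h''
        have : s₁⁻¹ = s₁ := mul_right_cancel heq
        rw [h]
        exact this
      · have heq : s₁⁻¹ * s₂⁻¹ = s₂ * s₁⁻¹ := by
          rw [show s₂ * s₁⁻¹ = (s₁ * s₂⁻¹)⁻¹ by group]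
          exact h'.symm.trans h''
        have key : s₁ * s₂ * s₁⁻¹ = s₂⁻¹ := by
          have := congrArg (fun z => s₁ * z) heq
          simpa [mul_assoc] using this.symm
        exact absurd (by rw [inv_inv]; exact key)
          (h3 s₂ hs₂ s₁⁻¹ hs1inv ne21' (by rw [inv_inv]; exact ne21))
    · rw [h, inv_inv] at h'
      rcases hk2 (s₁ * s₂⁻¹) with h'' | h''
      · have heq : s₁⁻¹ * s₂ = s₁ * s₂⁻¹ := h'.symm.trans h''
        have key : s₂ * s₂ = s₁ * s₁ := by
          have := congrArg (fun z => s₁ * z * s₂) heq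
          simpa [mul_assoc] using this
        exact absurd (by rw [sq, sq, ← key]; group)
          (h2 s₁ hs₁ s₂⁻¹ hs2inv h12' (by rw [inv_inv]; exact h12))
      · have heq : s₁⁻¹ * s₂ = s₂ * s₁⁻¹ := by
          rw [show s₂ * s₁⁻¹ = (s₁ * s₂⁻¹)⁻¹ by group]
          exact h'.symm.trans h''
        have heq2 : s₂⁻¹ * s₁ = s₁ * s₂⁻¹ := by
          have := congrArg (fun z : G => z⁻¹) heq
          simpa [mul_inv_rev] using this
        have key : s₂⁻¹ * s₁ * s₂ = s₁ := by rw [heq2]; group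
        exact absurd key (h4 s₁ hs₁ s₂ hs₂ h12 h12')
  -- Step 2 : χ fixes s₂
  have hfix2 : χ s₂ = s₂ := by
    rcases hk2 s₂ with h | h
    · exact h
    rcases hst s₂ s₁⁻¹ with h' | h'
    · rw [h] at h'
      rcases hk2 (s₂ * s₁⁻¹) with h'' | h''
      · have heq : s₂⁻¹ * s₁⁻¹ = s₂ * s₁⁻¹ := h'.symm.trans h''
        have : s₂⁻¹ = s₂ := mul_right_cancel heq
        rw [h]
        exact this
      · have heq : s₂⁻¹ * s₁⁻¹ = s₁ * s₂⁻¹ := by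
          rw [show s₁ * s₂⁻¹ = (s₂ * s₁⁻¹)⁻¹ by group]
          exact h'.symm.trans h''
        have key : s₂ * s₁ * s₂⁻¹ = s₁⁻¹ := by
          have := congrArg (fun z => s₂ * z) heq
          simpa [mul_assoc] using this.symm
        exact absurd (by rw [inv_inv]; exact key)
          (h3 s₁ hs₁ s₂⁻¹ hs2inv h12' (by rw [inv_inv]; exact h12))
    · rw [h, inv_inv] at h'
      rcases hk2 (s₂ * s₁⁻¹) with h'' | h''
      · have heq : s₂⁻¹ * s₁ = s₂ * s₁⁻¹ := h'.symm.trans h''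
        have key : s₁ * s₁ = s₂ * s₂ := by
          have := congrArg (fun z => s₂ * z * s₁) heq
          simpa [mul_assoc] using this
        exact absurd (by rw [sq, sq, ← key]; group)
          (h2 s₂ hs₂ s₁⁻¹ hs1inv ne21' (by rw [inv_inv]; exact ne21))
      · have heq : s₂⁻¹ * s₁ = s₁ * s₂⁻¹ := by
          rw [show s₁ * s₂⁻¹ = (s₂ * s₁⁻¹)⁻¹ by group]
          exact h'.symm.trans h''
        have key : s₂⁻¹ * s₁ * s₂ = s₁ := by rw [heq]; group
        exact absurd key (h4 s₁ hs₁ s₂ hs₂ h12 h12')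
  -- Step 3 : χ fixes s₁ * s₂
  have hfix12 : χ (s₁ * s₂) = s₁ * s₂ := by
    rcases hst s₁ s₂ with h' | h' <;> rw [hfix1] at h'
    · exact h'
    · rcases hk2 (s₁ * s₂) with h'' | h''
      · exact h''
      · have heq : s₁ * s₂⁻¹ = s₂⁻¹ * s₁⁻¹ := by
          rw [show s₂⁻¹ * s₁⁻¹ = (s₁ * s₂)⁻¹ by group]
          exact h'.symm.trans h''
        have key : s₂ * s₁ * s₂⁻¹ = s₁⁻¹ := by
          have := congrArg (fun z => s₂ * z) heq
          simpa [mul_assoc] using this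
        exact absurd (by rw [inv_inv]; exact key)
          (h3 s₁ hs₁ s₂⁻¹ hs2inv h12' (by rw [inv_inv]; exact h12))
  -- Step 4 : χ fixes everything
  rcases hk2 x with h | h
  · exact h
  by_cases hxx : x⁻¹ = x
  · rw [h, hxx]
  have key : ∀ y : G, χ y = y → x⁻¹ = y * x⁻¹ * y := by
    intro y hy
    rcases hst y (y⁻¹ * x) with h' | h'
    · rw [hy, show y * (y⁻¹ * x) = x by group] at h'
      exact absurd (h.symm.trans h') hxx
    · rw [hy, show y * (y⁻¹ * x) = x by group,
        show (y⁻¹ * x)⁻¹ = x⁻¹ * y by group] at h'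
      have h'' := h.symm.trans h'
      simpa [mul_assoc] using h''
  have e1 := key s₁ hfix1
  have e2 := key s₂ hfix2
  have e3 := key (s₁ * s₂) hfix12
  have c1 : x⁻¹ * s₁⁻¹ = s₁ * x⁻¹ := by
    conv_lhs => rw [e1]
    group
  have c2 : x⁻¹ * s₂⁻¹ = s₂ * x⁻¹ := by
    conv_lhs => rw [e2]
    group
  have e4 : x⁻¹ * 1 = x⁻¹ * (s₁⁻¹ * s₂⁻¹ * s₁ * s₂) := by
    calc x⁻¹ * 1 = x⁻¹ := mul_one _
    _ = s₁ * s₂ * x⁻¹ * (s₁ * s₂) := e3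
    _ = s₁ * (s₂ * x⁻¹) * (s₁ * s₂) := by group
    _ = s₁ * (x⁻¹ * s₂⁻¹) * (s₁ * s₂) := by rw [← c2]
    _ = s₁ * x⁻¹ * (s₂⁻¹ * s₁ * s₂) := by group
    _ = x⁻¹ * s₁⁻¹ * (s₂⁻¹ * s₁ * s₂) := by rw [← c1]
    _ = x⁻¹ * (s₁⁻¹ * s₂⁻¹ * s₁ * s₂) := by group
  have e5 : (1 : G) = s₁⁻¹ * s₂⁻¹ * s₁ * s₂ := mul_left_cancel e4
  have key4 : s₂⁻¹ * s₁ * s₂ = s₁ := by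
    calc s₂⁻¹ * s₁ * s₂ = s₁ * (s₁⁻¹ * s₂⁻¹ * s₁ * s₂) := by group
    _ = s₁ * 1 := by rw [← e5]
    _ = s₁ := mul_one _
  exact absurd key4 (h4 s₁ hs₁ s₂ hs₂ h12 h12')

end Main


end Aux

/-- If `G` admits a finite symmetric generating system `S₀` with no
triangles (`s₁s₂ ≠ s₃`), no relations `s₁²s₂² = e`, `s₁^{s₂} = s₁⁻¹` or `s₁^{s₂} = s₁`
among non-mutually-inverse elements, and at least two distinct non-inverse elements, then
every shared isometry for the family of all finite symmetric generating systems is a left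
translation, and the group of shared isometries is isomorphic to `G`. -/
theorem shared_isometries_symmetric {G : Type*} [Group G] [Group.FG G]
    (S₀ : Set G) (hfin : S₀.Finite) (hsym : S₀⁻¹ = S₀)
    (hgen : Subgroup.closure S₀ = ⊤)
    (h1 : ∀ s₁ ∈ S₀, ∀ s₂ ∈ S₀, ∀ s₃ ∈ S₀, s₁ * s₂ ≠ s₃)
    (h2 : ∀ s₁ ∈ S₀, ∀ s₂ ∈ S₀, s₁ ≠ s₂ → s₁ ≠ s₂⁻¹ → s₁ ^ 2 * s₂ ^ 2 ≠ 1)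
    (h3 : ∀ s₁ ∈ S₀, ∀ s₂ ∈ S₀, s₁ ≠ s₂ → s₁ ≠ s₂⁻¹ → s₂⁻¹ * s₁ * s₂ ≠ s₁⁻¹)
    (h4 : ∀ s₁ ∈ S₀, ∀ s₂ ∈ S₀, s₁ ≠ s₂ → s₁ ≠ s₂⁻¹ → s₂⁻¹ * s₁ * s₂ ≠ s₁)
    (h5 : ∃ s₁ ∈ S₀, ∃ s₂ ∈ S₀, s₁ ≠ s₂ ∧ s₁ ≠ s₂⁻¹) :
    (∀ φ : G → G, Function.Bijective φ →
      (∀ S : Set G, S.Finite → S⁻¹ = S → Subgroup.closure S = ⊤ →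
        ∀ x y : G, wdist S (φ x) (φ y) = wdist S x y) →
      ∃ c : G, ∀ x : G, φ x = c * x) ∧
    Nonempty (G ≃* sharedIsomGroup (symGenFamily G) wdist) := by
  classical
  obtain ⟨t₁, ht₁, t₂, ht₂, ht12, ht12'⟩ := h5
  have part1 : ∀ φ : G → G,
      (∀ S : Set G, S.Finite → S⁻¹ = S → Subgroup.closure S = ⊤ →
        ∀ x y : G, wdist S (φ x) (φ y) = wdist S x y) →
      ∀ x, φ x = φ 1 * x := by
    intro φ hiso x
    set χ : G → G := fun w => (φ 1)⁻¹ * φ w with hχ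
    have hχiso : SharedIso χ := by
      intro S hf hs hg u v
      simp only [hχ]
      rw [wdist_mul_left]
      exact hiso S hf hs hg u v
    have hχone : χ 1 = 1 := by simp [hχ]
    have hfx := fix_all hfin hsym hgen h1 h2 h3 h4 ht₁ ht₂ ht12 ht12' χ hχiso hχone x
    have := congrArg (fun z => φ 1 * z) hfx
    simpa [hχ, mul_assoc] using this
  constructor
  · intro φ _ hiso
    exact ⟨φ 1, part1 φ hiso⟩
  · refine ⟨?_⟩
    have hmemgrp : ∀ c : G,
        MulAction.toPermHom G G c ∈ sharedIsomGroup (symGenFamily G) wdist := by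
      intro c S hS x y
      show wdist S (c • x) (c • y) = wdist S x y
      rw [smul_eq_mul, smul_eq_mul]
      exact wdist_mul_left S c x y
    set F : G →* (sharedIsomGroup (symGenFamily G) wdist) :=
      (MulAction.toPermHom G G).codRestrict _ hmemgrp with hF
    have hFapp : ∀ (c : G) (x : G), ((F c : Equiv.Perm G)) x = c * x := by
      intro c x
      rfl
    refine MulEquiv.ofBijective F ⟨?_, ?_⟩
    · intro a b hab
      have h1' : ((F a : Equiv.Perm G)) 1 = ((F b : Equiv.Perm G)) 1 := by rw [hab]
      rw [hFapp, hFapp, mul_one, mul_one] at h1'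
      exact h1'
    · rintro ⟨φ, hφ⟩
      have hiso' : ∀ S : Set G, S.Finite → S⁻¹ = S → Subgroup.closure S = ⊤ →
          ∀ x y : G, wdist S (φ x) (φ y) = wdist S x y := fun S hf hs hg => hφ S ⟨hf, hs, hg⟩
      have hx := part1 (⇑φ) hiso'
      refine ⟨φ 1, ?_⟩
      apply Subtype.ext
      apply Equiv.ext
      intro x
      show ((F (φ 1) : Equiv.Perm G)) x = φ x
      rw [hFapp]
      exact (hx x).symm
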